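/- Let φ : ℝᵈ → ℝ be continuous and bounded, and for δ > 0 let W_δ(x₁,x₂) = V_{δ}(x₁,x₂)/V_δ², where V_δ(x₁,x₂) is the volume of B(x₁,δ)∩B(x₂,δ) and V_δ the volume of a ball of radius δ. Then for φ, ψ continuous with compact support, ∫∫_{ℝᵈ×ℝᵈ} φ(x₁) ψ(x₂) W_δ(x₁,x₂) dx₁ dx₂ → ∫_{ℝᵈ} φ(x) ψ(x) dx as δ → 0. -/

import Mathlib

set_option maxHeartbeats 1000000


open MeasureTheory Filter Topology Metric Set

namespace Stmt11Aux

variable {d : ℕ}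

/-- normalizing volume -/
noncomputable def V (d : ℕ) (δ : ℝ) : ℝ :=
  (volume (ball (0 : EuclideanSpace ℝ (Fin d)) δ)).toReal

/-- indicator of `dist x y < δ` -/
noncomputable def ind (δ : ℝ) (x y : EuclideanSpace ℝ (Fin d)) : ℝ :=
  if dist x y < δ then 1 else 0

/-- unnormalized ball average -/
noncomputable def Bf (δ : ℝ) (f : EuclideanSpace ℝ (Fin d) → ℝ)
    (y : EuclideanSpace ℝ (Fin d)) : ℝ :=
  ∫ x, f x * ind δ x y

lemma V_pos {δ : ℝ} (hδ : 0 < δ) : 0 < V d δ :=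
  ENNReal.toReal_pos (measure_ball_pos volume _ hδ).ne' measure_ball_lt_top.ne

lemma ind_nonneg {δ : ℝ} {x y : EuclideanSpace ℝ (Fin d)} : 0 ≤ ind δ x y := by
  unfold ind; split <;> norm_num

lemma ind_le_one {δ : ℝ} {x y : EuclideanSpace ℝ (Fin d)} : ind δ x y ≤ 1 := by
  unfold ind; split <;> norm_num

lemma measurable_ind_pair {δ : ℝ} :
    Measurable (fun p : EuclideanSpace ℝ (Fin d) × EuclideanSpace ℝ (Fin d) =>
      ind δ p.1 p.2) := by
  unfold ind
  exact Measurable.ite (isOpen_lt continuous_dist continuous_const).measurableSet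
    measurable_const measurable_const

lemma measurable_ind_left {δ : ℝ} (y : EuclideanSpace ℝ (Fin d)) :
    Measurable (fun x : EuclideanSpace ℝ (Fin d) => ind δ x y) := by
  unfold ind
  exact Measurable.ite (isOpen_lt (continuous_id.dist continuous_const)
    continuous_const).measurableSet measurable_const measurable_const

lemma measurable_ind_right {δ : ℝ} (x : EuclideanSpace ℝ (Fin d)) :
    Measurable (fun y : EuclideanSpace ℝ (Fin d) => ind δ x y) := by
  unfold ind
  exact Measurable.ite (isOpen_lt (continuous_const.dist continuous_id)
    continuous_const).measurableSet measurable_const measurable_const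

lemma ind_eq_indicator_left {δ : ℝ} (y : EuclideanSpace ℝ (Fin d)) :
    (fun x => ind δ x y) = (ball y δ).indicator (fun _ => (1 : ℝ)) := by
  funext x
  simp [ind, Set.indicator, Metric.mem_ball]

lemma ind_eq_indicator_right {δ : ℝ} (x : EuclideanSpace ℝ (Fin d)) :
    (fun y => ind δ x y) = (ball x δ).indicator (fun _ => (1 : ℝ)) := by
  funext y
  simp [ind, Set.indicator, Metric.mem_ball, dist_comm]

lemma integral_ind_left {δ : ℝ} (y : EuclideanSpace ℝ (Fin d)) :
    ∫ x, ind δ x y = V d δ := by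
  rw [ind_eq_indicator_left, integral_indicator_const _ measurableSet_ball]
  simp [V, Measure.real, Measure.addHaar_ball_center]

lemma integral_ind_right {δ : ℝ} (x : EuclideanSpace ℝ (Fin d)) :
    ∫ y, ind δ x y = V d δ := by
  rw [ind_eq_indicator_right, integral_indicator_const _ measurableSet_ball]
  simp [V, Measure.real, Measure.addHaar_ball_center]

lemma integrable_ind_left {δ : ℝ} (y : EuclideanSpace ℝ (Fin d)) :
    Integrable (fun x => ind δ x y) := by
  rw [ind_eq_indicator_left]
  exact (integrable_indicator_iff measurableSet_ball).2
    (integrableOn_const measure_ball_lt_top.ne)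

lemma integrable_ind_right {δ : ℝ} (x : EuclideanSpace ℝ (Fin d)) :
    Integrable (fun y => ind δ x y) := by
  rw [ind_eq_indicator_right]
  exact (integrable_indicator_iff measurableSet_ball).2
    (integrableOn_const measure_ball_lt_top.ne)

lemma integrable_mul_ind {δ M : ℝ} {f : EuclideanSpace ℝ (Fin d) → ℝ}
    (hf : Continuous f) (hM : ∀ x, ‖f x‖ ≤ M) (y : EuclideanSpace ℝ (Fin d)) :
    Integrable (fun x => f x * ind δ x y) := by
  refine Integrable.mono' ((integrable_ind_left (δ := δ) y).const_mul M)
    ((hf.measurable.mul (measurable_ind_left y)).aestronglyMeasurable) ?_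
  refine Eventually.of_forall fun x => ?_
  rw [norm_mul, Real.norm_of_nonneg (ind_nonneg)]
  exact mul_le_mul_of_nonneg_right (hM x) ind_nonneg

lemma norm_Bf_le {δ M : ℝ} {f : EuclideanSpace ℝ (Fin d) → ℝ}
    (hf : Continuous f) (hM : ∀ x, ‖f x‖ ≤ M) (y : EuclideanSpace ℝ (Fin d)) :
    ‖Bf δ f y‖ ≤ M * V d δ := by
  have hb : ∀ x, ‖f x * ind δ x y‖ ≤ M * ind δ x y := by
    intro x
    rw [norm_mul, Real.norm_of_nonneg (ind_nonneg (δ := δ) (x := x) (y := y))]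
    exact mul_le_mul_of_nonneg_right (hM x) ind_nonneg
  have h := norm_integral_le_of_norm_le ((integrable_ind_left (δ := δ) y).const_mul M)
    (Eventually.of_forall hb)
  calc ‖Bf δ f y‖ ≤ ∫ x, M * ind δ x y := h
    _ = M * V d δ := by rw [integral_const_mul, integral_ind_left]

lemma Bf_eq_zero {δ : ℝ} {f : EuclideanSpace ℝ (Fin d) → ℝ}
    {y : EuclideanSpace ℝ (Fin d)} (hy : y ∉ cthickening δ (tsupport f)) :
    Bf δ f y = 0 := by
  have hz : ∀ x, f x * ind δ x y = 0 := by
    intro x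
    by_cases h : dist x y < δ
    · by_cases hfx : f x = 0
      · simp [hfx]
      · exact absurd (Metric.thickening_subset_cthickening δ _
          (Metric.mem_thickening_iff.2 ⟨x, subset_tsupport f hfx, by
            rwa [dist_comm]⟩)) hy
    · simp [ind, h]
  unfold Bf
  simp only [hz, integral_zero]

lemma stronglyMeasurable_Bf {δ : ℝ} {f : EuclideanSpace ℝ (Fin d) → ℝ}
    (hf : Measurable f) : StronglyMeasurable (Bf δ f) := by
  have : StronglyMeasurable (fun p : EuclideanSpace ℝ (Fin d) × EuclideanSpace ℝ (Fin d) =>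
      f p.2 * ind δ p.2 p.1) :=
    ((hf.comp measurable_snd).mul
      (measurable_ind_pair.comp measurable_swap)).stronglyMeasurable
  exact this.integral_prod_right'

lemma tendsto_Bf_div {f : EuclideanSpace ℝ (Fin d) → ℝ} {M : ℝ}
    (hf : Continuous f) (hM : ∀ x, ‖f x‖ ≤ M) (y : EuclideanSpace ℝ (Fin d)) :
    Tendsto (fun δ => Bf δ f y / V d δ) (𝓝[>] (0 : ℝ)) (𝓝 (f y)) := by
  rw [Metric.tendsto_nhds]
  intro ε hε
  obtain ⟨η, hη, hcont⟩ := Metric.continuous_iff.1 hf y (ε / 2) (half_pos hε)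
  filter_upwards [Ioo_mem_nhdsGT_of_mem (Set.mem_Ico.2 ⟨le_refl (0:ℝ), hη⟩)] with δ hδ
  have hδ0 : 0 < δ := hδ.1
  have hv : 0 < V d δ := V_pos hδ0
  -- key bound
  have hint1 : Integrable (fun x => f x * ind δ x y) := integrable_mul_ind hf hM y
  have hint2 : Integrable (fun x => f y * ind δ x y) :=
    (integrable_ind_left y).const_mul (f y)
  have hsub : Bf δ f y - f y * V d δ = ∫ x, (f x - f y) * ind δ x y := by
    simp only [sub_mul]
    rw [integral_sub hint1 hint2, integral_const_mul, integral_ind_left]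
    rfl
  have hkey : ‖Bf δ f y - f y * V d δ‖ ≤ ε / 2 * V d δ := by
    rw [hsub]
    have hb : ∀ x, ‖(f x - f y) * ind δ x y‖ ≤ ε / 2 * ind δ x y := by
      intro x
      by_cases h : dist x y < δ
      · have hd2 : dist (f x) (f y) < ε / 2 := hcont x (lt_trans h hδ.2)
        have h2 : ‖f x - f y‖ ≤ ε / 2 := by
          rw [Real.norm_eq_abs, ← Real.dist_eq]; exact hd2.le
        rw [norm_mul, Real.norm_of_nonneg (ind_nonneg (δ := δ) (x := x) (y := y))]
        exact mul_le_mul_of_nonneg_right h2 ind_nonneg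
      · simp [ind, h]
    have h := norm_integral_le_of_norm_le ((integrable_ind_left (δ := δ) y).const_mul (ε / 2))
      (Eventually.of_forall hb)
    calc ‖∫ x, (f x - f y) * ind δ x y‖ ≤ ∫ x, ε / 2 * ind δ x y := h
      _ = ε / 2 * V d δ := by rw [integral_const_mul, integral_ind_left]
  have hrew : Bf δ f y / V d δ - f y = (Bf δ f y - f y * V d δ) / V d δ := by
    field_simp
  rw [Real.dist_eq, ← Real.norm_eq_abs, hrew, norm_div, Real.norm_of_nonneg hv.le]
  calc ‖Bf δ f y - f y * V d δ‖ / V d δ ≤ ε / 2 * V d δ / V d δ := by gcongr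
    _ = ε / 2 := by field_simp
    _ < ε := by linarith

lemma measure_inter_eq (δ : ℝ) (x₁ x₂ : EuclideanSpace ℝ (Fin d)) :
    (volume (ball x₁ δ ∩ ball x₂ δ)).toReal = ∫ y, ind δ x₁ y * ind δ x₂ y := by
  have h : (fun y => ind δ x₁ y * ind δ x₂ y)
      = (ball x₁ δ ∩ ball x₂ δ).indicator (fun _ => (1 : ℝ)) := by
    funext y
    by_cases h₁ : dist x₁ y < δ <;> by_cases h₂ : dist x₂ y < δ <;>
      simp [ind, Set.indicator, Metric.mem_ball, dist_comm, h₁, h₂]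
  rw [h, integral_indicator_const _ (measurableSet_ball.inter measurableSet_ball)]
  simp [Measure.real]

lemma fubini_key {δ : ℝ} (hδ : 0 < δ) {φ ψ : EuclideanSpace ℝ (Fin d) → ℝ} {Mφ Mψ : ℝ}
    (hφ : Continuous φ) (hφi : Integrable φ)
    (hψ : Continuous ψ) (hψc : HasCompactSupport ψ) (hψi : Integrable ψ)
    (hMφ : ∀ x, ‖φ x‖ ≤ Mφ) (hMψ : ∀ x, ‖ψ x‖ ≤ Mψ) :
    ∫ x₁, ∫ x₂, φ x₁ * ψ x₂ *
      ((volume (ball x₁ δ ∩ ball x₂ δ)).toReal / (V d δ) ^ 2)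
      = ∫ y, Bf δ φ y * Bf δ ψ y / (V d δ) ^ 2 := by
  have hswap1 : ∀ x₁, Integrable
      (Function.uncurry fun x₂ y => ψ x₂ * (ind δ x₁ y * ind δ x₂ y))
      (volume.prod volume) := by
    intro x₁
    refine Integrable.mono' (hψi.norm.mul_prod (integrable_ind_right (δ := δ) x₁)) ?_
      (Eventually.of_forall ?_)
    · exact ((hψ.measurable.comp measurable_fst).mul
        (((measurable_ind_right (δ := δ) x₁).comp measurable_snd).mul
          measurable_ind_pair)).aestronglyMeasurable
    · rintro ⟨x₂, y⟩
      simp only [Function.uncurry]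
      rw [norm_mul]
      have h1 : ‖ind δ x₁ y * ind δ x₂ y‖ ≤ ind δ x₁ y := by
        rw [norm_mul, Real.norm_of_nonneg (ind_nonneg (δ := δ)),
          Real.norm_of_nonneg (ind_nonneg (δ := δ))]
        calc ind δ x₁ y * ind δ x₂ y ≤ ind δ x₁ y * 1 :=
              mul_le_mul_of_nonneg_left ind_le_one ind_nonneg
          _ = ind δ x₁ y := mul_one _
      exact mul_le_mul_of_nonneg_left h1 (norm_nonneg _)
  have step1 : ∀ x₁, (∫ x₂, ψ x₂ * (volume (ball x₁ δ ∩ ball x₂ δ)).toReal)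
      = ∫ y, ind δ x₁ y * Bf δ ψ y := by
    intro x₁
    have h1 : (fun x₂ => ψ x₂ * (volume (ball x₁ δ ∩ ball x₂ δ)).toReal)
        = fun x₂ => ∫ y, ψ x₂ * (ind δ x₁ y * ind δ x₂ y) := by
      funext x₂
      rw [measure_inter_eq, ← integral_const_mul]
    rw [h1, integral_integral_swap (hswap1 x₁)]
    congr 1
    funext y
    calc ∫ x₂, ψ x₂ * (ind δ x₁ y * ind δ x₂ y)
        = ∫ x₂, ind δ x₁ y * (ψ x₂ * ind δ x₂ y) := by congr 1; funext x₂; ring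
      _ = ind δ x₁ y * Bf δ ψ y := by rw [integral_const_mul]; rfl
  have hBψ_bound : ∀ y, ‖Bf δ ψ y‖ ≤
      (cthickening δ (tsupport ψ)).indicator (fun _ => Mψ * V d δ) y := by
    intro y
    by_cases hy : y ∈ cthickening δ (tsupport ψ)
    · rw [indicator_of_mem hy]
      exact norm_Bf_le hψ hMψ y
    · rw [indicator_of_notMem hy, Bf_eq_zero hy]
      simp
  have hK : Integrable ((cthickening δ (tsupport ψ)).indicator (fun _ => Mψ * V d δ)) :=
    (integrable_indicator_iff isClosed_cthickening.measurableSet).2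
      (integrableOn_const hψc.cthickening.measure_lt_top.ne)
  have hswap2 : Integrable
      (Function.uncurry fun x₁ y => φ x₁ * (ind δ x₁ y * Bf δ ψ y))
      (volume.prod volume) := by
    refine Integrable.mono' (hφi.norm.mul_prod hK) ?_ (Eventually.of_forall ?_)
    · exact ((hφ.measurable.comp measurable_fst).mul
        (measurable_ind_pair.mul
          ((stronglyMeasurable_Bf hψ.measurable).measurable.comp
            measurable_snd))).aestronglyMeasurable
    · rintro ⟨x₁, y⟩
      simp only [Function.uncurry]
      rw [norm_mul]
      refine mul_le_mul_of_nonneg_left ?_ (norm_nonneg _)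
      calc ‖ind δ x₁ y * Bf δ ψ y‖ = ind δ x₁ y * ‖Bf δ ψ y‖ := by
            rw [norm_mul, Real.norm_of_nonneg (ind_nonneg (δ := δ))]
        _ ≤ 1 * ‖Bf δ ψ y‖ := mul_le_mul_of_nonneg_right ind_le_one (norm_nonneg _)
        _ = ‖Bf δ ψ y‖ := one_mul _
        _ ≤ (cthickening δ (tsupport ψ)).indicator (fun _ => Mψ * V d δ) y := hBψ_bound y
  calc ∫ x₁, ∫ x₂, φ x₁ * ψ x₂ * ((volume (ball x₁ δ ∩ ball x₂ δ)).toReal / V d δ ^ 2)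
      = ∫ x₁, (φ x₁ * ∫ y, ind δ x₁ y * Bf δ ψ y) / V d δ ^ 2 := by
        congr 1
        funext x₁
        have h2 : (fun x₂ => φ x₁ * ψ x₂ *
            ((volume (ball x₁ δ ∩ ball x₂ δ)).toReal / V d δ ^ 2))
            = fun x₂ => (φ x₁ * (ψ x₂ * (volume (ball x₁ δ ∩ ball x₂ δ)).toReal)) / V d δ ^ 2 := by
          funext x₂; ring
        rw [h2, integral_div, integral_const_mul, step1 x₁]
    _ = (∫ x₁, ∫ y, φ x₁ * (ind δ x₁ y * Bf δ ψ y)) / V d δ ^ 2 := by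
        rw [← integral_div]
        congr 1
        funext x₁
        rw [integral_const_mul]
    _ = (∫ y, ∫ x₁, φ x₁ * (ind δ x₁ y * Bf δ ψ y)) / V d δ ^ 2 := by
        rw [integral_integral_swap hswap2]
    _ = ∫ y, Bf δ φ y * Bf δ ψ y / V d δ ^ 2 := by
        rw [← integral_div]
        congr 1
        funext y
        have h3 : (fun x₁ => φ x₁ * (ind δ x₁ y * Bf δ ψ y))
            = fun x₁ => (φ x₁ * ind δ x₁ y) * Bf δ ψ y := by
          funext x₁; ring
        rw [h3, integral_mul_const]
        rfl

end Stmt11Aux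

open Stmt11Aux

theorem stmt_11 (d : ℕ) (hd : 1 ≤ d)
    (φ ψ : EuclideanSpace ℝ (Fin d) → ℝ)
    (hφ : Continuous φ) (hφc : HasCompactSupport φ)
    (hψ : Continuous ψ) (hψc : HasCompactSupport ψ) :
    Tendsto
      (fun δ : ℝ => ∫ x₁, ∫ x₂, φ x₁ * ψ x₂ *
        ((volume (Metric.ball x₁ δ ∩ Metric.ball x₂ δ)).toReal /
          ((volume (Metric.ball (0 : EuclideanSpace ℝ (Fin d)) δ)).toReal) ^ 2))
      (𝓝[>] 0) (𝓝 (∫ x, φ x * ψ x)) := by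
  obtain ⟨Mφ, hMφ⟩ := hφc.exists_bound_of_continuous hφ
  obtain ⟨Mψ, hMψ⟩ := hψc.exists_bound_of_continuous hψ
  have hφi : Integrable φ volume := hφ.integrable_of_hasCompactSupport hφc
  have hψi : Integrable ψ volume := hψ.integrable_of_hasCompactSupport hψc
  have hG : Tendsto (fun δ : ℝ => ∫ y, Bf δ φ y * Bf δ ψ y / V d δ ^ 2)
      (𝓝[>] (0:ℝ)) (𝓝 (∫ x, φ x * ψ x)) := by
    refine tendsto_integral_filter_of_dominated_convergence
      ((Metric.cthickening 1 (tsupport φ)).indicator (fun _ => Mφ * Mψ)) ?_ ?_ ?_ ?_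
    · exact Eventually.of_forall fun δ =>
        (((stronglyMeasurable_Bf hφ.measurable).measurable.mul
          (stronglyMeasurable_Bf hψ.measurable).measurable).div_const _).aestronglyMeasurable
    · filter_upwards [Ioc_mem_nhdsGT_of_mem (Set.mem_Ico.2 ⟨le_refl (0:ℝ), one_pos⟩)]
        with δ hδ
      refine Eventually.of_forall fun y => ?_
      by_cases hy : y ∈ Metric.cthickening 1 (tsupport φ)
      · have hv := V_pos (d := d) hδ.1
        rw [Set.indicator_of_mem hy, norm_div, norm_mul,
          Real.norm_of_nonneg (pow_nonneg hv.le 2), div_le_iff₀ (by positivity)]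
        have h1 := norm_Bf_le (δ := δ) hφ hMφ y
        have h2 := norm_Bf_le (δ := δ) hψ hMψ y
        calc ‖Bf δ φ y‖ * ‖Bf δ ψ y‖ ≤ (Mφ * V d δ) * (Mψ * V d δ) :=
              mul_le_mul h1 h2 (norm_nonneg _) (le_trans (norm_nonneg _) h1)
          _ = Mφ * Mψ * V d δ ^ 2 := by ring
      · have hy' : y ∉ Metric.cthickening δ (tsupport φ) :=
          fun h => hy (Metric.cthickening_mono hδ.2 _ h)
        rw [Set.indicator_of_notMem hy, Bf_eq_zero hy']
        simp
    · exact (integrable_indicator_iff isClosed_cthickening.measurableSet).2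
        (integrableOn_const (hφc.cthickening.measure_lt_top (μ := volume)).ne)
    · refine Eventually.of_forall fun y => ?_
      have hrw : ∀ δ : ℝ, Bf δ φ y * Bf δ ψ y / V d δ ^ 2
          = (Bf δ φ y / V d δ) * (Bf δ ψ y / V d δ) := by
        intro δ
        rw [pow_two, div_mul_div_comm]
      simp only [hrw]
      exact (tendsto_Bf_div hφ hMφ y).mul (tendsto_Bf_div hψ hMψ y)
  refine Tendsto.congr' ?_ hG
  filter_upwards [self_mem_nhdsWithin] with δ hδ
  have h := fubini_key (d := d) hδ hφ hφi hψ hψc hψi hMφ hMψ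
  simpa only [V] using h.symm
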